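/- Let θ be a primitive deterministic substitution on a two-letter alphabet whose subshift X_θ is periodic. Then the second eigenvalue λ₂ of the substitution matrix M_θ is 0, 1, or −1. -/

import Mathlib

/-- Iterates of a deterministic substitution on a letter. -/
def detPow {A : Type} (θ : A → List A) : ℕ → A → List A
  | 0, a => [a]
  | n + 1, a => (detPow θ n a).flatMap θ

/-- A word is `θ`-legal for a deterministic substitution `θ`. -/
def DetLegal {A : Type} (θ : A → List A) (w : List A) : Prop :=
  ∃ k : ℕ, 1 ≤ k ∧ ∃ c : A, w <:+: detPow θ k c

/-- The finite subword of a bi-infinite sequence starting at `i` of length `n`. -/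
def window {A : Type} (x : ℤ → A) (i : ℤ) (n : ℕ) : List A :=
  List.ofFn fun j : Fin n => x (i + (j.val : ℤ))

/-- The subshift of a deterministic substitution. -/
def XDet {A : Type} (θ : A → List A) : Set (ℤ → A) :=
  {x | ∀ (i : ℤ) (n : ℕ), DetLegal θ (window x i n)}

/-- The substitution matrix of a deterministic substitution on two letters. -/
def substMatrix (θ : Fin 2 → List (Fin 2)) : Matrix (Fin 2) (Fin 2) ℕ :=
  Matrix.of fun i j => (θ j).count i

/-- The second (smaller) eigenvalue of a nonnegative 2×2 integer matrix, which
always has real eigenvalues; the larger root is the Perron–Frobenius eigenvalue. -/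
noncomputable def secondEig (M : Matrix (Fin 2) (Fin 2) ℕ) : ℝ :=
  (((M.map (Nat.cast : ℕ → ℝ)).trace -
    Real.sqrt ((M.map (Nat.cast : ℕ → ℝ)).trace ^ 2 -
      4 * (M.map (Nat.cast : ℕ → ℝ)).det)) / 2)

-- Section A : list and detPow lemmas

lemma count01 (l : List (Fin 2)) : l.count 0 + l.count 1 = l.length := by
  induction l with
  | nil => simp
  | cons a l ih =>
    fin_cases a <;> simp [List.count_cons, ← ih] <;> omega

lemma flatMap_prefix {A B : Type} (f : A → List B) {u v : List A} (h : u <+: v) :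
    u.flatMap f <+: v.flatMap f := by
  obtain ⟨t, rfl⟩ := h
  rw [List.flatMap_append]; exact List.prefix_append _ _

lemma flatMap_suffix {A B : Type} (f : A → List B) {u v : List A} (h : u <:+ v) :
    u.flatMap f <:+ v.flatMap f := by
  obtain ⟨t, rfl⟩ := h
  rw [List.flatMap_append]; exact List.suffix_append _ _

lemma flatMap_infix {A B : Type} (f : A → List B) {u v : List A} (h : u <:+: v) :
    u.flatMap f <:+: v.flatMap f := by
  obtain ⟨s, t, rfl⟩ := h
  rw [List.flatMap_append, List.flatMap_append]
  exact ⟨s.flatMap f, t.flatMap f, rfl⟩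

lemma count_flatMap (f : Fin 2 → List (Fin 2)) (l : List (Fin 2)) (i : Fin 2) :
    (l.flatMap f).count i = (f 0).count i * l.count 0 + (f 1).count i * l.count 1 := by
  induction l with
  | nil => simp
  | cons a l ih =>
    rw [List.flatMap_cons, List.count_append, ih]
    fin_cases a <;> simp [List.count_cons] <;> ring

lemma detPow_add {A : Type} (θ : A → List A) (m n : ℕ) (a : A) :
    detPow θ (m + n) a = (detPow θ m a).flatMap (detPow θ n) := by
  induction n with
  | zero => simp [detPow]
  | succ n ih =>
    show detPow θ ((m + n) + 1) a = _
    rw [detPow, ih, List.flatMap_assoc]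
    rfl

lemma count_detPow (θ : Fin 2 → List (Fin 2)) (n : ℕ) (a i : Fin 2) :
    (detPow θ n a).count i = ((substMatrix θ) ^ n) i a := by
  induction n generalizing i with
  | zero =>
    rcases eq_or_ne i a with rfl | h
    · simp [detPow, pow_zero, Matrix.one_apply, List.count_singleton]
    · simp [detPow, pow_zero, Matrix.one_apply, List.count_singleton, h, Ne.symm h]
  | succ n ih =>
    rw [detPow, count_flatMap, ih, ih, pow_succ', Matrix.mul_apply, Fin.sum_univ_two]
    rfl

-- Section B : nonemptiness and growth, using primitivity

section Prim
variable {θ : Fin 2 → List (Fin 2)} {p : ℕ}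
  (hp : ∀ i j : Fin 2, 0 < ((substMatrix θ) ^ p) i j)

include hp

lemma p_pos : 1 ≤ p := by
  by_contra h
  have hp0 : p = 0 := by omega
  have := hp 0 1
  rw [hp0, pow_zero, Matrix.one_apply] at this
  simp at this

lemma theta_ne_nil (c : Fin 2) : θ c ≠ [] := by
  intro hnil
  have hcol : ∀ i, substMatrix θ i c = 0 := by
    intro i; simp [substMatrix, hnil]
  have h1 := p_pos hp
  obtain ⟨q, rfl⟩ : ∃ q, p = q + 1 := ⟨p - 1, by omega⟩
  have := hp 0 c
  rw [pow_succ, Matrix.mul_apply, Fin.sum_univ_two, hcol 0, hcol 1] at this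
  simp at this

lemma detPow_ne_nil (n : ℕ) (a : Fin 2) : detPow θ n a ≠ [] := by
  induction n with
  | zero => simp [detPow]
  | succ n ih =>
    rw [detPow]
    intro h
    rcases List.eq_nil_or_concat (detPow θ n a) with h0 | ⟨l, b, hl⟩
    · exact ih h0
    · rw [hl, List.concat_eq_append, List.flatMap_append] at h
      have := List.append_eq_nil_iff.mp h
      simp [theta_ne_nil hp b] at this

lemma length_detPow_pos (n : ℕ) (a : Fin 2) : 0 < (detPow θ n a).length :=
  List.length_pos_iff.mpr (detPow_ne_nil hp n a)

lemma length_detPow_p (a : Fin 2) : 2 ≤ (detPow θ p a).length := by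
  have h0 := count_detPow θ p a 0
  have h1 := count_detPow θ p a 1
  have := count01 (detPow θ p a)
  have e0 := hp 0 a
  have e1 := hp 1 a
  omega

lemma length_flatMap_detPow_p (w : List (Fin 2)) :
    2 * w.length ≤ (w.flatMap (detPow θ p)).length := by
  induction w with
  | nil => simp
  | cons a w ih =>
    rw [List.flatMap_cons, List.length_append]
    have := length_detPow_p hp a
    simp only [List.length_cons]
    omega

lemma length_detPow_mul (s : ℕ) (a : Fin 2) : 2 ^ s ≤ (detPow θ (p * s) a).length := by
  induction s with
  | zero => simp [detPow]
  | succ s ih =>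
    have : p * (s + 1) = p * s + p := by ring
    rw [this, detPow_add]
    calc 2 ^ (s + 1) = 2 * 2 ^ s := by ring
    _ ≤ 2 * (detPow θ (p * s) a).length := by omega
    _ ≤ _ := length_flatMap_detPow_p hp _

lemma Mpow_mul_pos (s : ℕ) (hs : 1 ≤ s) :
    ∀ i j : Fin 2, 0 < ((substMatrix θ) ^ (p * s)) i j := by
  induction s with
  | zero => omega
  | succ s ih =>
    intro i j
    rcases Nat.eq_or_lt_of_le hs with h1 | h2
    · simpa [← h1] using hp i j
    · have hs' : 1 ≤ s := by omega
      have : p * (s + 1) = p * s + p := by ring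
      rw [this, pow_add, Matrix.mul_apply, Fin.sum_univ_two]
      have h1 := Nat.mul_pos (ih hs' i 0) (hp 0 j)
      omega

end Prim

-- Section C : seed letters

/-- first letter (default 0) -/
def hd (l : List (Fin 2)) : Fin 2 := l.head?.getD 0
/-- last letter (default 0) -/
def lst (l : List (Fin 2)) : Fin 2 := l.getLast?.getD 0

lemma hd_cons (a : Fin 2) (t : List (Fin 2)) : hd (a :: t) = a := by unfold hd; rw [List.head?_cons, Option.getD_some]

lemma hd_append {l : List (Fin 2)} (l' : List (Fin 2)) (h : l ≠ []) :
    hd (l ++ l') = hd l := by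
  unfold hd; rw [List.head?_append_of_ne_nil _ h]

lemma lst_concat (a : Fin 2) (t : List (Fin 2)) : lst (t ++ [a]) = a := by
  unfold lst; rw [List.getLast?_concat]; rfl

lemma cons_of_hd {l : List (Fin 2)} (h : l ≠ []) : l = hd l :: l.tail := by
  conv_lhs => rw [← List.cons_head_tail h]
  unfold hd; rw [List.head?_eq_head h]; rfl

lemma concat_of_lst {l : List (Fin 2)} (h : l ≠ []) : l = l.dropLast ++ [lst l] := by
  conv_lhs => rw [← List.dropLast_append_getLast h]
  unfold lst; rw [List.getLast?_eq_getLast h]; rfl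

lemma hd_flatMap (f : Fin 2 → List (Fin 2)) (l : List (Fin 2)) (hl : l ≠ [])
    (hf : ∀ c, f c ≠ []) : hd (l.flatMap f) = hd (f (hd l)) := by
  obtain ⟨a, t, rfl⟩ : ∃ a t, l = a :: t := ⟨hd l, l.tail, cons_of_hd hl⟩
  rw [List.flatMap_cons, hd_append _ (hf a), hd_cons]

lemma lst_flatMap (f : Fin 2 → List (Fin 2)) (l : List (Fin 2)) (hl : l ≠ [])
    (hf : ∀ c, f c ≠ []) : lst (l.flatMap f) = lst (f (lst l)) := by
  rcases List.eq_nil_or_concat l with rfl | ⟨t, a, rfl⟩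
  · exact absurd rfl hl
  · rw [List.concat_eq_append, List.flatMap_append, lst_concat]
    have e1 : [a].flatMap f = f a := by simp
    rw [e1]
    conv_lhs => rw [concat_of_lst (hf a), ← List.append_assoc]
    rw [lst_concat]

lemma prefix_of_hd {l : List (Fin 2)} (h : l ≠ []) : [hd l] <+: l := by
  conv_rhs => rw [cons_of_hd h]
  exact ⟨l.tail, rfl⟩

lemma suffix_of_lst {l : List (Fin 2)} (h : l ≠ []) : [lst l] <:+ l := by
  conv_rhs => rw [concat_of_lst h]
  exact ⟨l.dropLast, rfl⟩

section Seeds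
variable {θ : Fin 2 → List (Fin 2)} {p : ℕ}
  (hp : ∀ i j : Fin 2, 0 < ((substMatrix θ) ^ p) i j)

/-- `Legal2 θ (u, v)` : the word `[u, v]` is legal. -/
def Legal2 (θ : Fin 2 → List (Fin 2)) (s : Fin 2 × Fin 2) : Prop :=
  ∃ j : ℕ, 1 ≤ j ∧ ∃ c : Fin 2, [s.1, s.2] <:+: detPow θ j c

/-- the pair-propagation map -/
def gmap (θ : Fin 2 → List (Fin 2)) (p : ℕ) (s : Fin 2 × Fin 2) : Fin 2 × Fin 2 :=
  (lst (detPow θ p s.1), hd (detPow θ p s.2))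

include hp

lemma hd_detPow_iter (m : ℕ) (c : Fin 2) :
    hd (detPow θ (p * m) c) = (fun c => hd (detPow θ p c))^[m] c := by
  induction m generalizing c with
  | zero => simp [detPow, hd_cons]
  | succ m ih =>
    have he : p * (m + 1) = p + p * m := by ring
    rw [he, detPow_add, hd_flatMap _ _ (detPow_ne_nil hp p c) (detPow_ne_nil hp _),
      ih, Function.iterate_succ_apply]

lemma lst_detPow_iter (m : ℕ) (c : Fin 2) :
    lst (detPow θ (p * m) c) = (fun c => lst (detPow θ p c))^[m] c := by
  induction m generalizing c with
  | zero => simp [detPow, lst]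
  | succ m ih =>
    have he : p * (m + 1) = p + p * m := by ring
    rw [he, detPow_add, lst_flatMap _ _ (detPow_ne_nil hp p c) (detPow_ne_nil hp _),
      ih, Function.iterate_succ_apply]

omit hp in
lemma gmap_iter (m : ℕ) (s : Fin 2 × Fin 2) :
    (gmap θ p)^[m] s = ((fun c => lst (detPow θ p c))^[m] s.1,
      (fun c => hd (detPow θ p c))^[m] s.2) := by
  induction m generalizing s with
  | zero => simp
  | succ m ih =>
    rw [Function.iterate_succ_apply, ih]
    rfl

lemma legal2_gmap {s : Fin 2 × Fin 2} (h : Legal2 θ s) : Legal2 θ (gmap θ p s) := by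
  obtain ⟨j, hj, c, hinf⟩ := h
  refine ⟨j + p, by omega, c, ?_⟩
  have h2 : ([s.1, s.2].flatMap (detPow θ p)) <:+: detPow θ (j + p) c := by
    rw [detPow_add]; exact flatMap_infix _ hinf
  refine List.IsInfix.trans ?_ h2
  have e : [s.1, s.2].flatMap (detPow θ p) = detPow θ p s.1 ++ detPow θ p s.2 := by
    simp
  rw [e]
  conv_rhs => rw [concat_of_lst (detPow_ne_nil hp p s.1),
    cons_of_hd (detPow_ne_nil hp p s.2)]
  exact ⟨(detPow θ p s.1).dropLast, (detPow θ p s.2).tail, by simp [gmap]⟩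

lemma legal2_gmap_iter (m : ℕ) {s : Fin 2 × Fin 2} (h : Legal2 θ s) :
    Legal2 θ ((gmap θ p)^[m] s) := by
  induction m with
  | zero => simpa
  | succ m ih => rw [Function.iterate_succ_apply']; exact legal2_gmap hp ih

/-- existence of good seed letters -/
lemma exists_seeds : ∃ (a b : Fin 2) (r : ℕ), 1 ≤ r ∧
    hd (detPow θ (p * r) a) = a ∧ lst (detPow θ (p * r) b) = b ∧
    Legal2 θ (b, a) := by
  -- initial legal pair
  set l := detPow θ p 0 with hl
  have hlen : 2 ≤ l.length := length_detPow_p hp 0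
  have h0 : 0 < l.length := by omega
  have h1 : 1 < l.length := by omega
  have hpair : Legal2 θ (l[0], l[1]) := by
    refine ⟨p, p_pos hp, 0, ?_⟩
    have : [l[0], l[1]] <+: l := by
      have : l = l[0] :: l[1] :: (l.drop 2) := by
        apply List.ext_getElem
        · simp; omega
        · intro n hn1 hn2
          match n with
          | 0 => simp
          | 1 => simp
          | (n+2) => simp [List.getElem_drop]
      conv_rhs => rw [this]
      exact ⟨l.drop 2, rfl⟩
    exact this.isInfix
  -- pigeonhole on iterates
  set s₀ : Fin 2 × Fin 2 := (l[0], l[1]) with hs₀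
  have hcard : Fintype.card (Fin 2 × Fin 2) < Fintype.card (Fin 5) := by simp
  obtain ⟨i, j, hij, hfij⟩ :=
    Fintype.exists_ne_map_eq_of_card_lt (fun i : Fin 5 => (gmap θ p)^[i.val] s₀) hcard
  -- wlog i < j
  suffices key : ∀ i j : ℕ, i < j → (gmap θ p)^[i] s₀ = (gmap θ p)^[j] s₀ →
      ∃ (a b : Fin 2) (r : ℕ), 1 ≤ r ∧
      hd (detPow θ (p * r) a) = a ∧ lst (detPow θ (p * r) b) = b ∧
      Legal2 θ (b, a) by
    rcases Nat.lt_or_ge i.val j.val with hlt | hge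
    · exact key i.val j.val hlt hfij
    · have hlt : j.val < i.val := by
        rcases Nat.eq_or_lt_of_le hge with h | h
        · exact absurd (Fin.ext h.symm) hij
        · exact h
      exact key j.val i.val hlt hfij.symm
  intro i j hlt hfij
  set s : Fin 2 × Fin 2 := (gmap θ p)^[i] s₀ with hs
  set r : ℕ := j - i with hr
  have hr1 : 1 ≤ r := by omega
  have hfix : (gmap θ p)^[r] s = s := by
    rw [hs, ← Function.iterate_add_apply]
    have : r + i = j := by omega
    rw [this, ← hfij]
  rw [gmap_iter] at hfix
  refine ⟨s.2, s.1, r, hr1, ?_, ?_, ?_⟩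
  · rw [hd_detPow_iter hp]
    exact congrArg Prod.snd hfix
  · rw [lst_detPow_iter hp]
    exact congrArg Prod.fst hfix
  · rw [Prod.mk.eta]
    exact legal2_gmap_iter hp i hpair

end Seeds

-- Section D : construction of a point of the subshift

/-- right approximants -/
def Rs (θ : Fin 2 → List (Fin 2)) (k : ℕ) (a : Fin 2) (m : ℕ) : List (Fin 2) :=
  detPow θ (k * (m + 1)) a
/-- left approximants -/
def Ls (θ : Fin 2 → List (Fin 2)) (k : ℕ) (b : Fin 2) (m : ℕ) : List (Fin 2) :=
  detPow θ (k * (m + 1)) b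

def xp (θ : Fin 2 → List (Fin 2)) (k : ℕ) (a : Fin 2) (n : ℕ) : Fin 2 :=
  (Rs θ k a n).getD n 0

def xm (θ : Fin 2 → List (Fin 2)) (k : ℕ) (b : Fin 2) (n : ℕ) : Fin 2 :=
  (Ls θ k b n).getD ((Ls θ k b n).length - 1 - n) 0

def xfun (θ : Fin 2 → List (Fin 2)) (k : ℕ) (a b : Fin 2) : ℤ → Fin 2 :=
  fun t => if 0 ≤ t then xp θ k a t.toNat else xm θ k b (-(t+1)).toNat

section Constr
variable {θ : Fin 2 → List (Fin 2)} {p : ℕ}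
  (hp : ∀ i j : Fin 2, 0 < ((substMatrix θ) ^ p) i j)
  {r : ℕ} {k : ℕ} (hk : k = p * r) (hr : 1 ≤ r)
  {a b : Fin 2}
  (ha : [a] <+: detPow θ k a) (hb : [b] <:+ detPow θ k b)
  (hleg : Legal2 θ (b, a))

include hp hk hr

omit hp hr hk in
lemma detPow_prefix_k (hj : [a] <+: detPow θ k a) (j : ℕ) :
    detPow θ j a <+: detPow θ (k + j) a := by
  rw [detPow_add]
  have := flatMap_prefix (detPow θ j) hj
  simpa using this

omit hp hr hk in
lemma detPow_suffix_k (hj : [b] <:+ detPow θ k b) (j : ℕ) :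
    detPow θ j b <:+ detPow θ (k + j) b := by
  rw [detPow_add]
  have := flatMap_suffix (detPow θ j) hj
  simpa using this

omit hp hr hk in
include ha in
lemma Rs_mono {m m' : ℕ} (h : m ≤ m') : Rs θ k a m <+: Rs θ k a m' := by
  induction m' with
  | zero => rw [Nat.le_zero.mp h]
  | succ m' ih =>
    rcases Nat.eq_or_lt_of_le h with h1 | h2
    · rw [h1]
    · refine (ih (by omega)).trans ?_
      unfold Rs
      have : k * (m' + 1 + 1) = k + k * (m' + 1) := by ring
      rw [this]
      exact detPow_prefix_k ha _

omit hp hr hk in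
include hb in
lemma Ls_mono {m m' : ℕ} (h : m ≤ m') : Ls θ k b m <:+ Ls θ k b m' := by
  induction m' with
  | zero => rw [Nat.le_zero.mp h]
  | succ m' ih =>
    rcases Nat.eq_or_lt_of_le h with h1 | h2
    · rw [h1]
    · refine (ih (by omega)).trans ?_
      unfold Ls
      have : k * (m' + 1 + 1) = k + k * (m' + 1) := by ring
      rw [this]
      exact detPow_suffix_k hb _

lemma len_Rs (m : ℕ) (c : Fin 2) : m + 2 ≤ (detPow θ (k * (m + 1)) c).length := by
  have h1 : k * (m + 1) = p * (r * (m + 1)) := by rw [hk]; ring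
  rw [h1]
  have h2 := length_detPow_mul hp (r * (m + 1)) c
  have h3 : 2 ^ (m + 1) ≤ 2 ^ (r * (m + 1)) :=
    Nat.pow_le_pow_right (by norm_num) (by nlinarith)
  have h4 := Nat.lt_two_pow_self (n := m + 1)
  omega

include ha in
lemma xp_eq (m n : ℕ) (h : n < (Rs θ k a m).length) :
    xp θ k a n = (Rs θ k a m)[n] := by
  have hn : n < (Rs θ k a n).length := by
    have := len_Rs hp hk hr n a
    unfold Rs; omega
  unfold xp
  rw [List.getD_eq_getElem _ _ hn]
  rcases Nat.le_total m n with hmn | hmn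
  · exact ((Rs_mono ha hmn).getElem h).symm
  · exact (Rs_mono ha hmn).getElem hn

include hb in
lemma xm_eq (m n : ℕ) (h : n < (Ls θ k b m).length) :
    xm θ k b n = (Ls θ k b m)[(Ls θ k b m).length - 1 - n] := by
  have hn : n < (Ls θ k b n).length := by
    have := len_Rs hp hk hr n b
    unfold Ls; omega
  unfold xm
  rw [List.getD_eq_getElem _ _ (by omega : (Ls θ k b n).length - 1 - n < (Ls θ k b n).length)]
  rcases Nat.le_total m n with hmn | hmn
  · have hs := Ls_mono hb hmn
    have hlen := hs.length_le
    have := hs.getElem (by omega : (Ls θ k b m).length - 1 - n < (Ls θ k b m).length)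
    rw [this]
    congr 1
    omega
  · have hs := Ls_mono hb hmn
    have hlen := hs.length_le
    have := hs.getElem (by omega : (Ls θ k b n).length - 1 - n < (Ls θ k b n).length)
    rw [this]
    congr 1
    omega

include ha hb in
lemma window_xfun (i : ℤ) (n : ℕ) (m : ℕ)
    (h1 : -((Ls θ k b m).length : ℤ) ≤ i)
    (h2 : i + n ≤ ((Rs θ k a m).length : ℤ)) :
    window (xfun θ k a b) i n =
      (((Ls θ k b m ++ Rs θ k a m).drop (i + (Ls θ k b m).length).toNat).take n) := by
  have hdi : (((i + ((Ls θ k b m).length : ℤ)).toNat : ℤ)) = i + (Ls θ k b m).length :=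
    Int.toNat_of_nonneg (by omega)
  apply List.ext_getElem
  · simp [window]
    omega
  · intro j hj1 hj2
    have hj : j < n := by simpa [window] using hj1
    have hwin : (window (xfun θ k a b) i n)[j] = xfun θ k a b (i + j) := by
      simp [window]
    rw [hwin]
    have hTake : (((Ls θ k b m ++ Rs θ k a m).drop ((i + ((Ls θ k b m).length : ℤ)).toNat)
        |>.take n))[j]
        = (Ls θ k b m ++ Rs θ k a m)[(i + ((Ls θ k b m).length : ℤ)).toNat + j]'(by
        simp [List.length_append]; omega) := by
      rw [List.getElem_take, List.getElem_drop]
    rw [hTake]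
    rcases Nat.lt_or_ge ((i + ((Ls θ k b m).length : ℤ)).toNat + j) (Ls θ k b m).length
      with hcase | hcase
    · rw [List.getElem_append_left hcase]
      have hneg : i + j < 0 := by omega
      have hx : xfun θ k a b (i + j) = xm θ k b (-(i + j + 1)).toNat := by
        unfold xfun
        rw [if_neg (by omega)]
      rw [hx]
      have hidx : (-(i + j + 1)).toNat
          = (Ls θ k b m).length - 1 - ((i + ((Ls θ k b m).length : ℤ)).toNat + j) := by
        omega
      rw [hidx, xm_eq hp hk hr hb m _ (by omega)]
      congr 1
      omega
    · rw [List.getElem_append_right hcase]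
      have hpos : 0 ≤ i + j := by omega
      have hx : xfun θ k a b (i + j) = xp θ k a (i + j).toNat := by
        unfold xfun
        rw [if_pos hpos]
      rw [hx]
      have hidx : (i + j).toNat
          = (i + ((Ls θ k b m).length : ℤ)).toNat + j - (Ls θ k b m).length := by omega
      rw [hidx, xp_eq hp hk hr ha m _ (by omega)]

include ha hb hleg in
lemma xfun_mem : xfun θ k a b ∈ XDet θ := by
  intro i n
  set m : ℕ := i.natAbs + n with hm
  have hL := len_Rs hp hk hr m b
  have hR := len_Rs hp hk hr m a
  have h1 : -((Ls θ k b m).length : ℤ) ≤ i := by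
    unfold Ls; have : (i.natAbs : ℤ) ≤ m := by omega
    omega
  have h2 : i + n ≤ ((Rs θ k a m).length : ℤ) := by
    unfold Rs at hR ⊢
    have : i ≤ (i.natAbs : ℤ) := Int.le_natAbs
    omega
  rw [window_xfun hp hk hr ha hb i n m h1 h2]
  obtain ⟨j, hj, c, hinf⟩ := hleg
  refine ⟨j + k * (m + 1), by omega, c, ?_⟩
  have hCm : Ls θ k b m ++ Rs θ k a m = [b, a].flatMap (detPow θ (k * (m + 1))) := by
    simp [Ls, Rs]
  have hbig : Ls θ k b m ++ Rs θ k a m <:+: detPow θ (j + k * (m + 1)) c := by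
    rw [hCm, detPow_add]
    exact flatMap_infix _ hinf
  refine List.IsInfix.trans ?_ hbig
  exact ((List.take_prefix _ _).isInfix).trans ((List.drop_suffix _ _).isInfix)

include ha in
lemma xfun_zero : xfun θ k a b 0 = a := by
  have h0 : (0 : ℕ) < (Rs θ k a 0).length := by
    have := len_Rs hp hk hr 0 a; unfold Rs; omega
  have : xfun θ k a b 0 = xp θ k a 0 := by unfold xfun; rw [if_pos le_rfl]; rfl
  rw [this, xp_eq hp hk hr ha 0 0 h0]
  have := ha.getElem (by simp : 0 < ([a] : List (Fin 2)).length)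
  simpa [Rs] using this.symm

end Constr

-- Section E : one-sided windows and periods

/-- one-sided window -/
def Wnd (r : ℕ → Fin 2) (i n : ℕ) : List (Fin 2) :=
  List.ofFn fun j : Fin n => r (i + j)

lemma length_Wnd (r : ℕ → Fin 2) (i n : ℕ) : (Wnd r i n).length = n := by
  simp [Wnd]

lemma getElem_Wnd (r : ℕ → Fin 2) (i n j : ℕ) (h : j < (Wnd r i n).length) :
    (Wnd r i n)[j] = r (i + j) := by
  unfold Wnd at *
  rw [List.getElem_ofFn]

lemma Wnd_append (r : ℕ → Fin 2) (i m n : ℕ) :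
    Wnd r i (m + n) = Wnd r i m ++ Wnd r (i + m) n := by
  apply List.ext_getElem
  · simp [Wnd]
  · intro j h1 h2
    rw [getElem_Wnd]
    rcases Nat.lt_or_ge j m with hc | hc
    · rw [List.getElem_append_left (by simpa [length_Wnd] using hc), getElem_Wnd]
    · rw [List.getElem_append_right (by simpa [length_Wnd] using hc), getElem_Wnd]
      congr 1
      simp [length_Wnd]
      omega

lemma Wnd_one (r : ℕ → Fin 2) (i : ℕ) : Wnd r i 1 = [r i] := by
  simp [Wnd]

lemma prefix_Wnd {r : ℕ → Fin 2} {l : List (Fin 2)} {N : ℕ} (h : l <+: Wnd r 0 N) :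
    l = Wnd r 0 l.length := by
  apply List.ext_getElem
  · simp [length_Wnd]
  · intro j h1 h2
    rw [getElem_Wnd]
    have := h.getElem h1
    rw [this, getElem_Wnd]

section Periodic
variable {r : ℕ → Fin 2} {P : ℕ} (hP : ∀ n, r (n + P) = r n)

include hP

lemma cnt_shift (i : ℕ) (c : Fin 2) :
    (Wnd r (i + 1) P).count c = (Wnd r i P).count c := by
  have h1 : Wnd r i (P + 1) = Wnd r i P ++ Wnd r (i + P) 1 := Wnd_append r i P 1
  have h2 : Wnd r i (1 + P) = Wnd r i 1 ++ Wnd r (i + 1) P := Wnd_append r i 1 P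
  have h3 : Wnd r (i + P) 1 = Wnd r i 1 := by
    rw [Wnd_one, Wnd_one, hP i]
  have h4 : (1 : ℕ) + P = P + 1 := by omega
  rw [h4] at h2
  have := congrArg (List.count c) (h1.symm.trans h2)
  rw [List.count_append, List.count_append, h3] at this
  omega

lemma cnt_const (i : ℕ) (c : Fin 2) :
    (Wnd r i P).count c = (Wnd r 0 P).count c := by
  induction i with
  | zero => rfl
  | succ i ih => rw [cnt_shift hP, ih]

lemma cnt_mul (i q : ℕ) (c : Fin 2) :
    (Wnd r i (q * P)).count c = q * (Wnd r 0 P).count c := by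
  induction q generalizing i with
  | zero => simp [Wnd]
  | succ q ih =>
    have : (q + 1) * P = P + q * P := by ring
    rw [this, Wnd_append, List.count_append, ih, cnt_const hP]
    ring

lemma cnt_decomp (i n : ℕ) (c : Fin 2) :
    (Wnd r i n).count c
      = (n / P) * (Wnd r 0 P).count c + (Wnd r (i + (n / P) * P) (n % P)).count c := by
  have hsplit : n = n / P * P + n % P := (Nat.div_add_mod' n P).symm
  conv_lhs => rw [hsplit, Wnd_append, List.count_append]
  rw [cnt_mul hP]

omit hP in
lemma periodic_sub {s t : ℕ} (hs : ∀ n, r (n + s) = r n) (ht : ∀ n, r (n + t) = r n)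
    (hts : t ≤ s) : ∀ n, r (n + (s - t)) = r n := by
  intro n
  have h1 : (n + (s - t)) + t = n + s := by omega
  have := ht (n + (s - t))
  rw [h1, hs n] at this
  exact this.symm

omit hP in
lemma periodic_mod {s t : ℕ} (hs : ∀ n, r (n + s) = r n) (ht : ∀ n, r (n + t) = r n)
    (htpos : 0 < t) : ∀ n, r (n + s % t) = r n := by
  induction s using Nat.strong_induction_on with
  | _ s ih =>
    rcases Nat.lt_or_ge s t with hc | hc
    · rwa [Nat.mod_eq_of_lt hc]
    · have h1 := periodic_sub hs ht hc
      have h2 : (s - t) % t = s % t := (Nat.mod_eq_sub_mod hc).symm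
      rw [← h2]
      exact ih (s - t) (by omega) h1

omit hP in
lemma periodic_gcd {s t : ℕ} (hs : ∀ n, r (n + s) = r n) (ht : ∀ n, r (n + t) = r n) :
    ∀ n, r (n + Nat.gcd s t) = r n := by
  induction s, t using Nat.gcd.induction with
  | H0 t => rwa [Nat.gcd_zero_left]
  | H1 s t hspos ih =>
    rw [Nat.gcd_rec]
    exact ih (periodic_mod ht hs hspos) hs

end Periodic

-- Section F : real 2x2 eigenvalue facts

lemma matrix_pow_map (M : Matrix (Fin 2) (Fin 2) ℕ) (k : ℕ) :
    (M ^ k).map (Nat.cast : ℕ → ℝ) = (M.map (Nat.cast : ℕ → ℝ)) ^ k := by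
  have h := map_pow ((Nat.castRingHom ℝ).mapMatrix) M k
  simpa [RingHom.mapMatrix_apply] using h

lemma cayley_two (A : Matrix (Fin 2) (Fin 2) ℝ) :
    A * A = A.trace • A - A.det • (1 : Matrix (Fin 2) (Fin 2) ℝ) := by
  ext i j
  rw [Matrix.mul_apply, Fin.sum_univ_two, Matrix.sub_apply, Matrix.smul_apply,
    Matrix.smul_apply, Matrix.trace_fin_two, Matrix.det_fin_two]
  fin_cases i <;> fin_cases j <;>
    simp [Matrix.one_apply] <;> ring

lemma trace_pow_eig (A : Matrix (Fin 2) (Fin 2) ℝ) (l1 l2 : ℝ)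
    (hsum : l1 + l2 = A.trace) (hprod : l1 * l2 = A.det) (m : ℕ) :
    (A ^ m).trace = l1 ^ m + l2 ^ m := by
  have key : ∀ m, (A ^ m).trace = l1 ^ m + l2 ^ m ∧
      (A ^ (m + 1)).trace = l1 ^ (m + 1) + l2 ^ (m + 1) := by
    intro m
    induction m with
    | zero =>
      constructor
      · rw [pow_zero, Matrix.trace_one]; norm_num
      · rw [pow_one, pow_one, pow_one, hsum]
    | succ m ih =>
      obtain ⟨ih1, ih2⟩ := ih
      refine ⟨ih2, ?_⟩
      have hA2 : A ^ (m + 2) = A.trace • A ^ (m + 1) - A.det • A ^ m := by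
        have e1 : A ^ (m + 2) = A ^ m * (A * A) := by
          rw [pow_add, pow_two]
        rw [e1, cayley_two, Matrix.mul_sub, Matrix.mul_smul, Matrix.mul_smul,
          Matrix.mul_one, ← pow_succ]
      rw [show m + 1 + 1 = m + 2 by rfl, hA2, Matrix.trace_sub, Matrix.trace_smul,
        Matrix.trace_smul, ih1, ih2, ← hsum, ← hprod]
      simp only [smul_eq_mul]
      ring
  exact (key m).1

-- Section G : the key combinatorial lemma

lemma key_combinatorial (θ : Fin 2 → List (Fin 2)) {p : ℕ}
    (hp : ∀ i j : Fin 2, 0 < ((substMatrix θ) ^ p) i j)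
    (hper : ∀ x ∈ XDet θ, ∃ per : ℤ, 0 < per ∧ ∀ n : ℤ, x (n + per) = x n) :
    ∃ (k lam v0 v1 : ℕ), 1 ≤ k ∧ 0 < v0 ∧ 0 < v1 ∧
      ((substMatrix θ ^ k) 0 0) * v0 + ((substMatrix θ ^ k) 0 1) * v1 = lam * v0 ∧
      ((substMatrix θ ^ k) 1 0) * v0 + ((substMatrix θ ^ k) 1 1) * v1 = lam * v1 ∧
      |(((substMatrix θ ^ k) 0 0 : ℤ) + ((substMatrix θ ^ k) 1 1 : ℤ)) - (lam : ℤ)| ≤ 1 := by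
  classical
  -- seeds
  obtain ⟨a, b, rr, hrr, hhd, hlst, hleg⟩ := exists_seeds hp
  set k : ℕ := p * rr with hk
  have hk1 : 1 ≤ k := by
    have := p_pos hp
    have : 1 ≤ p := this
    calc 1 = 1 * 1 := by ring
    _ ≤ p * rr := Nat.mul_le_mul this hrr
  have ha : [a] <+: detPow θ k a := by
    have h := prefix_of_hd (detPow_ne_nil hp k a)
    rwa [hhd] at h
  have hb : [b] <:+ detPow θ k b := by
    have h := suffix_of_lst (detPow_ne_nil hp k b)
    rwa [hlst] at h
  -- the point of the subshift
  set x : ℤ → Fin 2 := xfun θ k a b with hxdef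
  have hx : x ∈ XDet θ := xfun_mem hp rfl hrr ha hb hleg
  obtain ⟨per, hperpos, hperiod⟩ := hper x hx
  set rseq : ℕ → Fin 2 := fun n => x n with hrseq
  have hper0 : ∃ t : ℕ, 0 < t ∧ ∀ n : ℕ, rseq (n + t) = rseq n := by
    refine ⟨per.toNat, by omega, fun n => ?_⟩
    have := hperiod n
    have he : ((n + per.toNat : ℕ) : ℤ) = (n : ℤ) + per := by omega
    rw [hrseq]
    simp only
    rw [he, this]
  -- least positive period
  set P : ℕ := Nat.find hper0 with hPdef
  obtain ⟨hPpos, hP⟩ : 0 < P ∧ ∀ n : ℕ, rseq (n + P) = rseq n := Nat.find_spec hper0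
  have hPmin : ∀ t : ℕ, 0 < t → (∀ n : ℕ, rseq (n + t) = rseq n) → P ≤ t := by
    intro t ht hper'
    exact Nat.find_min' hper0 ⟨ht, hper'⟩
  -- bridge between rseq and the approximants
  have hbridge : ∀ m j (hj : j < (Rs θ k a m).length), rseq j = (Rs θ k a m)[j] := by
    intro m j hj
    have h1 : rseq j = xp θ k a j := by
      rw [hrseq]
      simp only [hxdef]
      unfold xfun
      rw [if_pos (by positivity : (0:ℤ) ≤ (j:ℤ))]
      norm_num
    rw [h1]
    exact xp_eq hp rfl hrr ha m j hj
  have hRW : ∀ m, Rs θ k a m = Wnd rseq 0 (Rs θ k a m).length := by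
    intro m
    apply List.ext_getElem
    · rw [length_Wnd]
    · intro j h1 h2
      rw [getElem_Wnd, Nat.zero_add]
      exact (hbridge m j h1).symm
  have hcoro : ∀ (l : List (Fin 2)) m, l <+: Rs θ k a m → l = Wnd rseq 0 l.length := by
    intro l m hl
    rw [hRW m] at hl
    exact prefix_Wnd hl
  -- the F map
  set F : List (Fin 2) → List (Fin 2) := fun l => l.flatMap (detPow θ k) with hFdef
  have hFapp : ∀ l1 l2 : List (Fin 2), F (l1 ++ l2) = F l1 ++ F l2 :=
    fun l1 l2 => List.flatMap_append
  have hF : ∀ m, F (Rs θ k a m) = Rs θ k a (m + 1) := by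
    intro m
    have he : k * (m + 1 + 1) = k * (m + 1) + k := by ring
    show (Rs θ k a m).flatMap (detPow θ k) = Rs θ k a (m + 1)
    unfold Rs
    rw [he, detPow_add]
  have hFpre : ∀ {l1 l2 : List (Fin 2)}, l1 <+: l2 → F l1 <+: F l2 :=
    fun h => flatMap_prefix (detPow θ k) h
  have hlenR : ∀ m, m + 2 ≤ (Rs θ k a m).length := fun m => len_Rs hp rfl hrr m a
  -- prefix windows
  have hWndpre : ∀ (n N : ℕ), n ≤ N → Wnd rseq 0 n <+: Wnd rseq 0 N := by
    intro n N h
    have : Wnd rseq 0 N = Wnd rseq 0 n ++ Wnd rseq (0 + n) (N - n) := by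
      rw [← Wnd_append]
      congr 1
      omega
    rw [this]
    exact List.prefix_append _ _
  have hWndRs : ∀ n m, n ≤ (Rs θ k a m).length → Wnd rseq 0 n <+: Rs θ k a m := by
    intro n m h
    rw [hRW m]
    exact hWndpre _ _ h
  -- period word and counts
  set w : List (Fin 2) := Wnd rseq 0 P with hwdef
  set v : Fin 2 → ℕ := fun c => w.count c with hvdef
  have hvsum : v 0 + v 1 = P := by
    rw [hvdef]
    simp only
    rw [count01, hwdef, length_Wnd]
  -- N entries
  set NM : Matrix (Fin 2) (Fin 2) ℕ := (substMatrix θ) ^ k with hNM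
  have hcountF : ∀ (l : List (Fin 2)) (c : Fin 2),
      (F l).count c = NM c 0 * l.count 0 + NM c 1 * l.count 1 := by
    intro l c
    show (l.flatMap (detPow θ k)).count c = _
    rw [count_flatMap, count_detPow, count_detPow, hNM]
  -- F of the period word
  set L' : ℕ := (F w).length with hL'def
  have hFw : F w = Wnd rseq 0 L' := by
    refine hcoro (F w) (P + 1) ?_
    have h1 : w <+: Rs θ k a P := hWndRs P P (by have := hlenR P; omega)
    have h2 : F w <+: F (Rs θ k a P) := hFpre h1
    rw [hF P] at h2
    exact h2
  have hL'pos : 0 < L' := by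
    rw [hL'def]
    show 0 < (w.flatMap (detPow θ k)).length
    have hw0 : w ≠ [] := by
      rw [hwdef]
      intro hcon
      have := congrArg List.length hcon
      rw [length_Wnd] at this
      simp at this
      omega
    obtain ⟨c, t, hct⟩ : ∃ c t, w = c :: t := by
      rcases w with _ | ⟨c, t⟩
      · exact absurd rfl hw0
      · exact ⟨c, t, rfl⟩
    rw [hct, List.flatMap_cons, List.length_append]
    have := length_detPow_pos hp k c
    omega
  -- the period word decomposition
  have hwsplit : ∀ q : ℕ, Wnd rseq 0 ((q + 1) * P) = w ++ Wnd rseq 0 (q * P) := by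
    intro q
    have e1 : (q + 1) * P = P + q * P := by ring
    rw [e1, Wnd_append, hwdef]
    congr 1
    apply List.ext_getElem
    · rw [length_Wnd, length_Wnd]
    · intro j h1 h2
      rw [getElem_Wnd, getElem_Wnd]
      rw [Nat.zero_add, Nat.zero_add, Nat.add_comm P j, hP j]
  -- F maps initial periodic windows to initial windows
  have hFq : ∀ q, F (Wnd rseq 0 (q * P)) = Wnd rseq 0 (q * L') := by
    intro q
    induction q with
    | zero => simp [Wnd, hFdef]
    | succ q ih =>
      have e3 : F (Wnd rseq 0 ((q+1) * P)) = F w ++ F (Wnd rseq 0 (q * P)) := by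
        rw [hwsplit q, hFapp]
      have e4 : F (Wnd rseq 0 ((q+1) * P))
          = Wnd rseq 0 (F (Wnd rseq 0 ((q+1) * P))).length := by
        refine hcoro _ ((q+1) * P + 1) ?_
        have h1 : Wnd rseq 0 ((q+1)*P) <+: Rs θ k a ((q+1)*P) := by
          refine hWndRs _ _ ?_
          have := hlenR ((q+1)*P)
          omega
        have h2 : F (Wnd rseq 0 ((q+1)*P)) <+: F (Rs θ k a ((q+1)*P)) := hFpre h1
        rw [hF _] at h2
        exact h2
      have e5 : (F (Wnd rseq 0 ((q+1) * P))).length = (q + 1) * L' := by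
        rw [e3, List.length_append, ih, length_Wnd, hL'def]
        ring
      rw [← e5, ← e4]
  -- identity for the right period
  have hident : ∀ q, Wnd rseq 0 ((q + 1) * L') = F w ++ Wnd rseq 0 (q * L') := by
    intro q
    have h1 := hFq (q + 1)
    rw [hwsplit q, hFapp, hFq q] at h1
    exact h1.symm
  -- L' is a period of rseq
  have hRPL' : ∀ n : ℕ, rseq (n + L') = rseq n := by
    intro n
    set q : ℕ := n + 1 with hq
    have hn : n < q * L' := by
      have : q ≤ q * L' := Nat.le_mul_of_pos_right q hL'pos
      omega
    have hid := hident q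
    have hlenF : (F w).length = L' := rfl
    have hx1 : (q+1) * L' = q * L' + L' := by ring
    have hx2 : L' + n < (q+1) * L' := by
      rw [hx1]
      have := Nat.add_lt_add_right hn L'
      linarith
    have h1 : (Wnd rseq 0 ((q+1) * L'))[L' + n]'(by rw [length_Wnd]; exact hx2) = rseq (L' + n) := by
      rw [getElem_Wnd, Nat.zero_add]
    have h2 : (F w ++ Wnd rseq 0 (q * L'))[L' + n]'(by
        rw [List.length_append, hlenF, length_Wnd]; omega) = (Wnd rseq 0 (q * L'))[n]'(by
        rw [length_Wnd]; omega) := by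
      rw [List.getElem_append_right (by rw [hlenF]; omega)]
      congr 1
      rw [hlenF]
      omega
    have h3 : (Wnd rseq 0 (q * L'))[n]'(by rw [length_Wnd]; omega) = rseq (0 + n) := by
      rw [getElem_Wnd]
    have h4 : rseq (L' + n) = rseq (0 + n) := by
      rw [← h1, ← h3, ← h2]
      congr 1
    rw [Nat.add_comm n L', h4, Nat.zero_add]
  -- P divides L'
  have hdvd : P ∣ L' := by
    have hg := periodic_gcd hP hRPL'
    have hgpos : 0 < Nat.gcd P L' := Nat.gcd_pos_of_pos_left L' hPpos
    have h1 : P ≤ Nat.gcd P L' := hPmin _ hgpos hg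
    have h2 : Nat.gcd P L' ≤ P := Nat.le_of_dvd hPpos (Nat.gcd_dvd_left P L')
    have h3 : Nat.gcd P L' = P := le_antisymm h2 h1
    rw [← h3]
    exact Nat.gcd_dvd_right P L'
  obtain ⟨lam, hlam⟩ := hdvd
  -- eigenvector equations
  have heig : ∀ c : Fin 2, NM c 0 * v 0 + NM c 1 * v 1 = lam * v c := by
    intro c
    have h1 : (F w).count c = NM c 0 * v 0 + NM c 1 * v 1 := hcountF w c
    have h2 : (F w).count c = lam * v c := by
      rw [hFw]
      have he : L' = lam * P := by rw [hlam]; ring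
      rw [he, cnt_mul hP 0 lam c]
    rw [h1] at h2
    exact h2
  -- positivity of v
  have hvpos : ∀ c : Fin 2, 0 < v c := by
    intro c
    have hcount : 0 < (Rs θ k a 0).count c := by
      have he : (Rs θ k a 0).count c = ((substMatrix θ) ^ (p * rr)) c a := by
        show (detPow θ (k * (0 + 1)) a).count c = _
        rw [count_detPow]
        congr 2
        rw [hk]
        ring
      rw [he]
      exact Mpow_mul_pos hp rr hrr c a
    have hmem : c ∈ Rs θ k a 0 := List.count_pos_iff.mp hcount
    obtain ⟨j, hj, hjc⟩ := List.mem_iff_getElem.mp hmem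
    have hrj : rseq j = c := by rw [hbridge 0 j hj, hjc]
    have h2 : v c = (Wnd rseq j P).count c := (cnt_const hP j c).symm
    rw [h2]
    refine List.count_pos_iff.mpr ?_
    have h3 : (Wnd rseq j P)[0]'(by rw [length_Wnd]; omega) = c := by
      rw [getElem_Wnd, Nat.add_zero, hrj]
    rw [← h3]
    exact List.getElem_mem _
  -- the letter-count sequences
  set u : ℕ → Fin 2 → ℕ := fun m c => (detPow θ (k*m) a).count c with hudef
  set ell : ℕ → ℕ := fun m => (detPow θ (k*m) a).length with helldef
  have husum : ∀ m, u m 0 + u m 1 = ell m := fun m => count01 _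
  have hustep : ∀ m c, u (m+1) c = NM c 0 * u m 0 + NM c 1 * u m 1 := by
    intro m c
    have he : k * (m+1) = k*m + k := by ring
    have h1 : detPow θ (k*(m+1)) a = F (detPow θ (k*m) a) := by
      rw [he, detPow_add]
    show (detPow θ (k*(m+1)) a).count c = _
    rw [h1, hcountF]
  have hwinm : ∀ m, detPow θ (k*m) a = Wnd rseq 0 (ell m) := by
    intro m
    have h1 := detPow_prefix_k ha (k*m)
    have h2 : detPow θ (k*m) a <+: Rs θ k a m := by
      show detPow θ (k*m) a <+: detPow θ (k * (m+1)) a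
      have he : k * (m+1) = k + k*m := by ring
      rw [he]
      exact h1
    exact hcoro _ m h2
  -- the deviation sequence
  set cseq : ℕ → ℤ := fun m => (v 1 : ℤ) * (u m 0) - (v 0 : ℤ) * (u m 1) with hcdef
  have hvP : v 0 ≤ P ∧ v 1 ≤ P := by omega
  have hbound : ∀ m, |cseq m| ≤ (P : ℤ) * P := by
    intro m
    have hd0 := cnt_decomp hP 0 (ell m) 0
    have hd1 := cnt_decomp hP 0 (ell m) 1
    set q0 : ℕ := ell m / P with hq0
    set e0 : ℕ := (Wnd rseq (0 + q0 * P) (ell m % P)).count 0 with he0def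
    set e1 : ℕ := (Wnd rseq (0 + q0 * P) (ell m % P)).count 1 with he1def
    have hu0 : u m 0 = q0 * v 0 + e0 := by
      show (detPow θ (k*m) a).count 0 = _
      rw [hwinm m]
      exact hd0
    have hu1 : u m 1 = q0 * v 1 + e1 := by
      show (detPow θ (k*m) a).count 1 = _
      rw [hwinm m]
      exact hd1
    have he0 : e0 ≤ P := by
      have h1 := List.count_le_length (a := (0 : Fin 2)) (l := Wnd rseq (0 + q0 * P) (ell m % P))
      rw [length_Wnd] at h1
      have h2 : ell m % P < P := Nat.mod_lt _ hPpos
      omega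
    have he1 : e1 ≤ P := by
      have h1 := List.count_le_length (a := (1 : Fin 2)) (l := Wnd rseq (0 + q0 * P) (ell m % P))
      rw [length_Wnd] at h1
      have h2 : ell m % P < P := Nat.mod_lt _ hPpos
      omega
    have hc : cseq m = (v 1 : ℤ) * e0 - (v 0 : ℤ) * e1 := by
      show (v 1 : ℤ) * (u m 0) - (v 0 : ℤ) * (u m 1) = _
      rw [hu0, hu1]
      push_cast
      ring
    rw [hc, abs_le]
    have h1 : (v 1 : ℤ) * e0 ≤ (P:ℤ) * P := by exact_mod_cast Nat.mul_le_mul hvP.2 he0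
    have h2 : (v 0 : ℤ) * e1 ≤ (P:ℤ) * P := by exact_mod_cast Nat.mul_le_mul hvP.1 he1
    have h3 : (0:ℤ) ≤ (v 1 : ℤ) * e0 := by positivity
    have h4 : (0:ℤ) ≤ (v 0 : ℤ) * e1 := by positivity
    constructor <;> linarith
  set beta : ℤ := ((NM 0 0 : ℕ) : ℤ) + ((NM 1 1 : ℕ) : ℤ) - (lam : ℤ) with hbeta
  have hrec : ∀ m, cseq (m+1) = beta * cseq m := by
    intro m
    have E1 : ((u (m+1) 0 : ℕ) : ℤ) = (NM 0 0 : ℤ) * u m 0 + (NM 0 1 : ℤ) * u m 1 := by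
      exact_mod_cast congrArg (Nat.cast : ℕ → ℤ) (hustep m 0)
    have E2 : ((u (m+1) 1 : ℕ) : ℤ) = (NM 1 0 : ℤ) * u m 0 + (NM 1 1 : ℤ) * u m 1 := by
      exact_mod_cast congrArg (Nat.cast : ℕ → ℤ) (hustep m 1)
    have E3 : (NM 0 0 : ℤ) * v 0 + (NM 0 1 : ℤ) * v 1 = (lam : ℤ) * v 0 := by
      exact_mod_cast congrArg (Nat.cast : ℕ → ℤ) (heig 0)
    have E4 : (NM 1 0 : ℤ) * v 0 + (NM 1 1 : ℤ) * v 1 = (lam : ℤ) * v 1 := by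
      exact_mod_cast congrArg (Nat.cast : ℕ → ℤ) (heig 1)
    show (v 1 : ℤ) * (u (m+1) 0) - (v 0 : ℤ) * (u (m+1) 1)
      = beta * ((v 1 : ℤ) * (u m 0) - (v 0 : ℤ) * (u m 1))
    rw [hbeta]
    linear_combination (v 1 : ℤ) * E1 - (v 0 : ℤ) * E2 + (u m 1 : ℤ) * E3 - (u m 0 : ℤ) * E4
  have hiter : ∀ m, cseq m = beta ^ m * cseq 0 := by
    intro m
    induction m with
    | zero => simp
    | succ m ih => rw [hrec m, ih]; ring
  have hc0 : 1 ≤ |cseq 0| := by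
    have hu00 : u 0 0 = List.count 0 [a] := by
      show (detPow θ (k*0) a).count 0 = _
      rw [Nat.mul_zero]
      rfl
    have hu01 : u 0 1 = List.count 1 [a] := by
      show (detPow θ (k*0) a).count 1 = _
      rw [Nat.mul_zero]
      rfl
    have hv0 := hvpos 0
    have hv1 := hvpos 1
    have hcs : cseq 0 = (v 1 : ℤ) * (u 0 0) - (v 0 : ℤ) * (u 0 1) := rfl
    fin_cases a
    · rw [hcs, hu00, hu01]
      simp [List.count_singleton]
      omega
    · rw [hcs, hu00, hu01]
      simp [List.count_singleton]
      omega
  have habsbeta : |beta| ≤ 1 := by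
    by_contra hcon
    push_neg at hcon
    have hb2 : (2:ℤ) ≤ |beta| := hcon
    set m : ℕ := P * P with hm
    have h1 : (2:ℤ)^m ≤ |beta|^m := pow_le_pow_left₀ (by norm_num) hb2 m
    have h2 : |cseq m| = |beta|^m * |cseq 0| := by
      rw [hiter m, abs_mul, abs_pow]
    have h3 : |beta|^m ≤ |beta|^m * |cseq 0| :=
      le_mul_of_one_le_right (by positivity) hc0
    have h4 := hbound m
    have h5 : ((m:ℕ):ℤ) < 2^m := by exact_mod_cast Nat.lt_two_pow_self (n := m)
    have h6 : ((m:ℕ):ℤ) = (P:ℤ) * P := by rw [hm]; push_cast; ring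
    linarith
  refine ⟨k, lam, v 0, v 1, hk1, hvpos 0, hvpos 1, heig 0, heig 1, ?_⟩
  exact habsbeta

-- Section H : final theorem



lemma pow_eq_one_of_nonneg {y : ℝ} {k : ℕ} (hy : 0 ≤ y) (hk : k ≠ 0) (h : y ^ k = 1) :
    y = 1 := by
  rcases lt_trichotomy y 1 with hc | hc | hc
  · have := pow_lt_one₀ hy hc hk
    rw [h] at this
    norm_num at this
  · exact hc
  · have := one_lt_pow₀ hc hk
    rw [h] at this
    norm_num at this

theorem periodic_second_eigenvalue' (θ : Fin 2 → List (Fin 2))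
    (hprim : ∃ p : ℕ, ∀ i j : Fin 2, 0 < ((substMatrix θ) ^ p) i j)
    (hper : ∀ x ∈ XDet θ, ∃ per : ℤ, 0 < per ∧ ∀ n : ℤ, x (n + per) = x n) :
    secondEig (substMatrix θ) = 0 ∨ secondEig (substMatrix θ) = 1 ∨
      secondEig (substMatrix θ) = -1 := by
  obtain ⟨p, hp⟩ := hprim
  obtain ⟨k, lam, v0, v1, hk1, hv0, hv1, heig0, heig1, hbeta⟩ := key_combinatorial θ hp hper
  have hk0 : k ≠ 0 := by omega
  unfold secondEig
  set M : Matrix (Fin 2) (Fin 2) ℕ := substMatrix θ with hM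
  set A : Matrix (Fin 2) (Fin 2) ℝ := M.map (Nat.cast : ℕ → ℝ) with hA
  set t : ℝ := A.trace with ht
  set dd : ℝ := A.det with hdd
  set s : ℝ := Real.sqrt (t ^ 2 - 4 * dd) with hs
  set l1 : ℝ := (t + s) / 2 with hl1
  set l2 : ℝ := (t - s) / 2 with hl2
  -- basic real facts
  have hAapp : ∀ i j, A i j = (M i j : ℝ) := by
    intro i j
    rw [hA, Matrix.map_apply]
  have ht0 : 0 ≤ t := by
    rw [ht, Matrix.trace_fin_two]
    rw [hAapp 0 0, hAapp 1 1]
    positivity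
  have hs0 : 0 ≤ s := Real.sqrt_nonneg _
  have hdisc : 0 ≤ t ^ 2 - 4 * dd := by
    rw [ht, hdd, Matrix.trace_fin_two, Matrix.det_fin_two, hAapp 0 0, hAapp 1 1,
      hAapp 0 1, hAapp 1 0]
    nlinarith [sq_nonneg ((M 0 0 : ℝ) - (M 1 1 : ℝ)),
      mul_nonneg (Nat.cast_nonneg' (M 0 1) : (0:ℝ) ≤ M 0 1) (Nat.cast_nonneg' (M 1 0))]
  have hs2 : s ^ 2 = t ^ 2 - 4 * dd := Real.sq_sqrt hdisc
  have hsum : l1 + l2 = t := by rw [hl1, hl2]; ring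
  have hprod : l1 * l2 = dd := by
    have h1 : l1 * l2 = (t ^ 2 - s ^ 2) / 4 := by rw [hl1, hl2]; ring
    rw [h1, hs2]; ring
  have habs2 : |l2| ≤ l1 := by
    rw [abs_le]
    constructor
    · rw [hl1, hl2]; linarith
    · rw [hl1, hl2]; linarith
  have hl10 : 0 ≤ l1 := le_trans (abs_nonneg l2) habs2
  have htr := trace_pow_eig A l1 l2 hsum hprod
  -- entries of M^k
  have hmap : (M ^ k).map (Nat.cast : ℕ → ℝ) = A ^ k := by
    rw [hA]; exact matrix_pow_map M k
  have htrk : l1 ^ k + l2 ^ k = ((M ^ k) 0 0 : ℝ) + ((M ^ k) 1 1 : ℝ) := by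
    have h1 := htr k
    rw [← hmap, Matrix.trace_fin_two, Matrix.map_apply, Matrix.map_apply] at h1
    rw [← h1]
  have hdetk : l1 ^ k * l2 ^ k = ((M ^ k) 0 0 : ℝ) * ((M ^ k) 1 1 : ℝ)
      - ((M ^ k) 0 1 : ℝ) * ((M ^ k) 1 0 : ℝ) := by
    have h1 : (A ^ k).det = (A.det) ^ k := by rw [Matrix.det_pow]
    have h2 : l1 ^ k * l2 ^ k = (l1 * l2) ^ k := by rw [mul_pow]
    rw [h2, hprod, hdd, ← h1, ← hmap, Matrix.det_fin_two, Matrix.map_apply,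
      Matrix.map_apply, Matrix.map_apply, Matrix.map_apply]
  -- integer quadratic for lam
  have hquadZ : ((lam : ℤ) - ((M ^ k) 0 0 : ℤ)) * ((lam : ℤ) - ((M ^ k) 1 1 : ℤ))
      = ((M ^ k) 0 1 : ℤ) * ((M ^ k) 1 0 : ℤ) := by
    have E3 : ((M ^ k) 0 0 : ℤ) * v0 + ((M ^ k) 0 1 : ℤ) * v1 = (lam : ℤ) * v0 := by
      exact_mod_cast congrArg (Nat.cast : ℕ → ℤ) heig0
    have E4 : ((M ^ k) 1 0 : ℤ) * v0 + ((M ^ k) 1 1 : ℤ) * v1 = (lam : ℤ) * v1 := by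
      exact_mod_cast congrArg (Nat.cast : ℕ → ℤ) heig1
    have h1 : ((lam : ℤ) - ((M ^ k) 0 0 : ℤ)) * v0 = ((M ^ k) 0 1 : ℤ) * v1 := by
      linear_combination -E3
    have h2 : ((lam : ℤ) - ((M ^ k) 1 1 : ℤ)) * v1 = ((M ^ k) 1 0 : ℤ) * v0 := by
      linear_combination -E4
    have hvne : ((v0 : ℤ) * (v1 : ℤ)) ≠ 0 := by positivity
    refine mul_right_cancel₀ hvne ?_
    linear_combination ((lam : ℤ) - ((M ^ k) 1 1 : ℤ)) * (v1 : ℤ) * h1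
      + ((M ^ k) 0 1 : ℤ) * (v1 : ℤ) * h2
  -- the real factorisation
  have hq : ((lam : ℝ) - ((M ^ k) 0 0 : ℝ)) * ((lam : ℝ) - ((M ^ k) 1 1 : ℝ))
      = ((M ^ k) 0 1 : ℝ) * ((M ^ k) 1 0 : ℝ) := by
    exact_mod_cast congrArg (Int.cast : ℤ → ℝ) hquadZ
  have hfact : ((lam : ℝ) - l1 ^ k) * ((lam : ℝ) - l2 ^ k) = 0 := by
    linear_combination (-(lam : ℝ)) * htrk + hdetk + hq
  -- beta case analysis
  set bZ : ℤ := ((M ^ k) 0 0 : ℤ) + ((M ^ k) 1 1 : ℤ) - (lam : ℤ) with hbZ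
  have hb3 : bZ = -1 ∨ bZ = 0 ∨ bZ = 1 := by
    rw [abs_le] at hbeta
    omega
  have hbcast : (bZ : ℝ) = l1 ^ k + l2 ^ k - (lam : ℝ) := by
    rw [hbZ, htrk]
    push_cast
    ring
  rcases mul_eq_zero.mp hfact with hcase | hcase
  · -- lam = l1 ^ k
    have hlamk : (lam : ℝ) = l1 ^ k := by linarith
    have hl2k : l2 ^ k = (bZ : ℝ) := by rw [hbcast, hlamk]; ring
    rcases hb3 with hb | hb | hb
    · -- l2 ^ k = -1
      have h1 : l2 ^ k = -1 := by rw [hl2k, hb]; norm_num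
      have h2 : |l2| ^ k = 1 := by
        rw [← abs_pow, h1]; norm_num
      have h3 : |l2| = 1 := pow_eq_one_of_nonneg (abs_nonneg l2) hk0 h2
      rcases abs_eq (by norm_num : (0:ℝ) ≤ 1) |>.mp h3 with h4 | h4
      · right; left; exact h4
      · right; right; exact h4
    · -- l2 ^ k = 0
      have h1 : l2 ^ k = 0 := by rw [hl2k, hb]; norm_num
      left
      exact pow_eq_zero_iff hk0 |>.mp h1
    · -- l2 ^ k = 1
      have h1 : l2 ^ k = 1 := by rw [hl2k, hb]; norm_num
      have h2 : |l2| ^ k = 1 := by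
        rw [← abs_pow, h1]; norm_num
      have h3 : |l2| = 1 := pow_eq_one_of_nonneg (abs_nonneg l2) hk0 h2
      rcases abs_eq (by norm_num : (0:ℝ) ≤ 1) |>.mp h3 with h4 | h4
      · right; left; exact h4
      · right; right; exact h4
  · -- lam = l2 ^ k
    have hlamk : (lam : ℝ) = l2 ^ k := by linarith
    have hl1k : l1 ^ k = (bZ : ℝ) := by rw [hbcast, hlamk]; ring
    have hbnn : (0:ℝ) ≤ (bZ : ℝ) := by rw [← hl1k]; positivity
    have hb01 : bZ = 0 ∨ bZ = 1 := by
      have : (0:ℤ) ≤ bZ := by exact_mod_cast hbnn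
      rw [abs_le] at hbeta
      omega
    rcases hb01 with hb | hb
    · -- l1 ^ k = 0, hence l1 = 0, hence l2 = 0
      have h1 : l1 ^ k = 0 := by rw [hl1k, hb]; norm_num
      have h2 : l1 = 0 := pow_eq_zero_iff hk0 |>.mp h1
      left
      have := habs2
      rw [h2] at this
      have h3 : |l2| = 0 := le_antisymm this (abs_nonneg l2)
      exact abs_eq_zero.mp h3
    · -- l1 = 1
      have h1 : l1 ^ k = 1 := by rw [hl1k, hb]; norm_num
      have h2 : l1 = 1 := pow_eq_one_of_nonneg hl10 hk0 h1
      have h3 : |l2| ≤ 1 := by rw [← h2]; exact habs2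
      have h4 : |(lam : ℝ)| ≤ 1 := by
        rw [hlamk, abs_pow]
        calc |l2| ^ k ≤ 1 ^ k := pow_le_pow_left₀ (abs_nonneg l2) h3 k
        _ = 1 := one_pow k
      have h5 : lam ≤ 1 := by
        have h6 : ((lam : ℕ) : ℝ) ≤ 1 := by
          rw [abs_of_nonneg (by positivity : (0:ℝ) ≤ ((lam:ℕ):ℝ))] at h4
          exact h4
        exact_mod_cast h6
      rcases Nat.lt_or_ge lam 1 with hl | hl
      · -- lam = 0
        have h7 : lam = 0 := by omega
        have h8 : l2 ^ k = 0 := by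
          rw [← hlamk, h7]
          norm_num
        left
        exact pow_eq_zero_iff hk0 |>.mp h8
      · -- lam = 1
        have h7 : lam = 1 := by omega
        have h8 : l2 ^ k = 1 := by
          rw [← hlamk, h7]
          norm_num
        have h9 : |l2| ^ k = 1 := by rw [← abs_pow, h8]; norm_num
        have h10 : |l2| = 1 := pow_eq_one_of_nonneg (abs_nonneg l2) hk0 h9
        rcases abs_eq (by norm_num : (0:ℝ) ≤ 1) |>.mp h10 with h11 | h11
        · right; left; exact h11
        · right; right; exact h11

/-- a primitive deterministic substitution on two letters whose
subshift is periodic has second eigenvalue `0`, `1` or `-1`. -/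
theorem periodic_second_eigenvalue (θ : Fin 2 → List (Fin 2))
    (hprim : ∃ p : ℕ, ∀ i j : Fin 2, 0 < ((substMatrix θ) ^ p) i j)
    (hper : ∀ x ∈ XDet θ, ∃ per : ℤ, 0 < per ∧ ∀ n : ℤ, x (n + per) = x n) :
    secondEig (substMatrix θ) = 0 ∨ secondEig (substMatrix θ) = 1 ∨
      secondEig (substMatrix θ) = -1 :=
  periodic_second_eigenvalue' θ hprim hper
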